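/- Let (M,P,g) be a Riemannian W₃-manifold on which the invariant tensor L(x,y)z = R(x,y)z + ½Q(x,y)z vanishes, where Q(x,y)z = (∇ₓT)(y,z) − (∇_yT)(x,z) + T(x,T(y,z)) − T(y,T(x,z)) and T(x,y) = −(∇ₓP)Py − (∇_yP)Px. Then ‖∇P‖² = −8τ and τ** = 5τ, where τ is the scalar curvature and τ** = g^{ij}g^{kl}R(e_i,e_k,Pe_l,Pe_j). -/

import Mathlib

open Finset

section W3Aux
variable {ι : Type*} [Fintype ι]

private def S4 (ginv : ι → ι → ℝ) (f : ι → ι → ι → ι → ℝ) : ℝ :=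
  ∑ i, ∑ j, ∑ k, ∑ l, ginv i j * ginv k l * f i j k l

private lemma sum_comm3 (G : ι → ι → ι → ℝ) :
    (∑ i, ∑ j, ∑ l, G i j l) = ∑ l, ∑ i, ∑ j, G i j l := by
  rw [show (∑ i, ∑ j, ∑ l, G i j l) = ∑ i, ∑ l, ∑ j, G i j l from
    Finset.sum_congr rfl fun i _ => Finset.sum_comm]
  exact Finset.sum_comm

private lemma sum_comm4 (F : ι → ι → ι → ι → ℝ) :
    (∑ i, ∑ j, ∑ k, ∑ l, F i j k l) = ∑ k, ∑ l, ∑ i, ∑ j, F i j k l := by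
  calc (∑ i, ∑ j, ∑ k, ∑ l, F i j k l)
      = ∑ i, ∑ k, ∑ j, ∑ l, F i j k l := Finset.sum_congr rfl fun i _ => Finset.sum_comm
    _ = ∑ k, ∑ i, ∑ j, ∑ l, F i j k l := Finset.sum_comm
    _ = ∑ k, ∑ l, ∑ i, ∑ j, F i j k l := Finset.sum_congr rfl fun k _ => sum_comm3 _

private lemma S4_congr {ginv : ι → ι → ℝ} {f h : ι → ι → ι → ι → ℝ}
    (H : ∀ i j k l, f i j k l = h i j k l) : S4 ginv f = S4 ginv h := by
  unfold S4
  exact sum_congr rfl fun i _ => sum_congr rfl fun j _ => sum_congr rfl fun k _ =>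
    sum_congr rfl fun l _ => by rw [H]

private lemma S4_ij {ginv : ι → ι → ℝ} (hs : ∀ i j, ginv i j = ginv j i)
    (f : ι → ι → ι → ι → ℝ) :
    S4 ginv (fun i j k l => f j i k l) = S4 ginv f := by
  unfold S4
  rw [Finset.sum_comm]
  exact sum_congr rfl fun i _ => sum_congr rfl fun j _ => sum_congr rfl fun k _ =>
    sum_congr rfl fun l _ => by rw [hs j i]

private lemma S4_kl {ginv : ι → ι → ℝ} (hs : ∀ i j, ginv i j = ginv j i)
    (f : ι → ι → ι → ι → ℝ) :
    S4 ginv (fun i j k l => f i j l k) = S4 ginv f := by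
  unfold S4
  refine sum_congr rfl fun i _ => sum_congr rfl fun j _ => ?_
  rw [Finset.sum_comm]
  exact sum_congr rfl fun k _ => sum_congr rfl fun l _ => by rw [hs l k]

private lemma S4_pair {ginv : ι → ι → ℝ} (f : ι → ι → ι → ι → ℝ) :
    S4 ginv (fun i j k l => f k l i j) = S4 ginv f := by
  unfold S4
  rw [sum_comm4]
  exact sum_congr rfl fun k _ => sum_congr rfl fun l _ => sum_congr rfl fun i _ =>
    sum_congr rfl fun j _ => by ring

private lemma S4_add {ginv : ι → ι → ℝ} (f h : ι → ι → ι → ι → ℝ) :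
    S4 ginv (fun i j k l => f i j k l + h i j k l) = S4 ginv f + S4 ginv h := by
  unfold S4
  simp [mul_add, Finset.sum_add_distrib]

private lemma S4_zero {ginv : ι → ι → ℝ} : S4 ginv (fun _ _ _ _ => (0:ℝ)) = 0 := by
  simp [S4]

private lemma S4_eq_ij {ginv : ι → ι → ℝ} (f : ι → ι → ι → ι → ℝ) :
    S4 ginv f = ∑ i, ∑ j, ginv i j * ∑ k, ∑ l, ginv k l * f i j k l := by
  unfold S4
  refine sum_congr rfl fun i _ => sum_congr rfl fun j _ => ?_
  rw [Finset.mul_sum]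
  refine sum_congr rfl fun k _ => ?_
  rw [Finset.mul_sum]
  exact sum_congr rfl fun l _ => by ring

private lemma S4_eq_kl {ginv : ι → ι → ℝ} (f : ι → ι → ι → ι → ℝ) :
    S4 ginv f = ∑ k, ∑ l, ginv k l * ∑ i, ∑ j, ginv i j * f i j k l := by
  unfold S4
  rw [sum_comm4]
  refine sum_congr rfl fun k _ => sum_congr rfl fun l _ => ?_
  rw [Finset.mul_sum]
  refine sum_congr rfl fun i _ => ?_
  rw [Finset.mul_sum]
  exact sum_congr rfl fun j _ => by ring

private lemma S4_zero_of_ij {ginv : ι → ι → ℝ} (f : ι → ι → ι → ι → ℝ)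
    (H : ∀ k l, (∑ i, ∑ j, ginv i j * f i j k l) = 0) : S4 ginv f = 0 := by
  rw [S4_eq_kl]
  simp [H]

private lemma S4_zero_of_kl {ginv : ι → ι → ℝ} (f : ι → ι → ι → ι → ℝ)
    (H : ∀ i j, (∑ k, ∑ l, ginv k l * f i j k l) = 0) : S4 ginv f = 0 := by
  rw [S4_eq_ij]
  simp [H]

private lemma S2_swap {ginv : ι → ι → ℝ} (hs : ∀ i j, ginv i j = ginv j i)
    (f : ι → ι → ℝ) :
    (∑ i, ∑ j, ginv i j * f i j) = ∑ i, ∑ j, ginv i j * f j i := by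
  rw [Finset.sum_comm]
  exact sum_congr rfl fun i _ => sum_congr rfl fun j _ => by rw [hs j i]

private lemma S2_add {f h : ι → ι → ℝ} :
    (∑ i, ∑ j, (f i j + h i j)) = (∑ i, ∑ j, f i j) + (∑ i, ∑ j, h i j) := by
  simp [Finset.sum_add_distrib]

private lemma S4_neg {ginv : ι → ι → ℝ} (f : ι → ι → ι → ι → ℝ) :
    S4 ginv (fun i j k l => -(f i j k l)) = - S4 ginv f := by
  unfold S4
  simp [Finset.sum_neg_distrib, mul_neg]

private lemma S4_cmul {ginv : ι → ι → ℝ} (c : ℝ) (f : ι → ι → ι → ι → ℝ) :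
    S4 ginv (fun i j k l => c * f i j k l) = c * S4 ginv f := by
  unfold S4
  rw [Finset.mul_sum]
  refine Finset.sum_congr rfl fun i _ => ?_
  rw [Finset.mul_sum]
  refine Finset.sum_congr rfl fun j _ => ?_
  rw [Finset.mul_sum]
  refine Finset.sum_congr rfl fun k _ => ?_
  rw [Finset.mul_sum]
  exact Finset.sum_congr rfl fun l _ => by ring

end W3Aux

set_option maxHeartbeats 4000000 in
open Finset in
/-- Corollary 5.4 of the paper.  Let `(M,P,g)` be a Riemannian `W₃`-manifold on
which the invariant tensor `L(x,y)z = R(x,y)z + ½Q(x,y)z` vanishes, where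
`Q(x,y)z = (∇ₓT)(y,z) − (∇_yT)(x,z) + T(x,T(y,z)) − T(y,T(x,z))` and
`T(x,y) = −(∇ₓP)Py − (∇_yP)Px`.  Then `‖∇P‖² = −8τ` and `τ** = 5τ`. -/
theorem L_zero_implies_norm_and_tau
    {X : Type*} [AddCommGroup X] [Module ℝ X]
    {ι : Type*} [Fintype ι] [DecidableEq ι]
    (g : X →ₗ[ℝ] X →ₗ[ℝ] ℝ) (P : X →ₗ[ℝ] X)
    (nabla : X → X → X) (D : X → ℝ → ℝ) (Rm : X → X → X → X)
    (b : Module.Basis ι ℝ X) (ginv : ι → ι → ℝ)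
    (hgsymm : ∀ x y : X, g x y = g y x)
    (hP2 : ∀ x : X, P (P x) = x)
    (hPg : ∀ x y : X, g (P x) (P y) = g x y)
    (hDadd : ∀ x : X, ∀ a c : ℝ, D x (a + c) = D x a + D x c)
    (hcompat : ∀ x y z : X, D x (g y z) = g (nabla x y) z + g y (nabla x z))
    (hginv : ∀ i k : ι, ∑ j, g (b i) (b j) * ginv j k = if i = k then 1 else 0)
    (hginvsymm : ∀ i j : ι, ginv i j = ginv j i) :
    let nablaP : X → X → X := fun x y => nabla x (P y) - P (nabla x y)
    let F : X → X → X → ℝ := fun x y z => g (nablaP x y) z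
    let nabla2P : X → X → X → X := fun x y z =>
      nabla x (nablaP y z) - nablaP (nabla x y) z - nablaP y (nabla x z)
    let R4 : X → X → X → X → ℝ := fun x y z w => g (Rm x y z) w
    let rho : X → X → ℝ := fun y z => ∑ i, ∑ j, ginv i j * R4 (b i) y z (b j)
    let tau : ℝ := ∑ k, ∑ l, ginv k l * rho (b k) (b l)
    let tauss : ℝ := ∑ i, ∑ j, ∑ k, ∑ l,
      ginv i j * ginv k l * R4 (b i) (b k) (P (b l)) (P (b j))
    let nP2 : ℝ := ∑ i, ∑ j, ∑ k, ∑ l,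
      ginv i j * ginv k l * g (nablaP (b i) (b k)) (nablaP (b j) (b l))
    let T : X → X → X := fun x y => - nablaP x (P y) - nablaP y (P x)
    let nablaT : X → X → X → X := fun x y z =>
      nabla x (T y z) - T (nabla x y) z - T y (nabla x z)
    let Q : X → X → X → X := fun x y z =>
      nablaT x y z - nablaT y x z + T x (T y z) - T y (T x z)
    -- Ricci identity
    (∀ x y z : X, nabla2P x y z - nabla2P y x z = Rm x y (P z) - P (Rm x y z)) →
    -- symmetries of the curvature tensor
    (∀ x y z w : X, R4 x y z w = - R4 y x z w) →
    (∀ x y z w : X, R4 x y z w = - R4 x y w z) →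
    (∀ x y z w : X, R4 x y z w = R4 z w x y) →
    (∀ x y z w : X, R4 x y z w + R4 y z x w + R4 z x y w = 0) →
    -- the W₃ condition
    (∀ x y z : X, F x y z + F y z x + F z x y = 0) →
    -- the vanishing of N̄, equivalent to the W₃ condition
    (∀ x y : X, nablaP x (P y) + nablaP (P x) y + nablaP y (P x) + nablaP (P y) x = 0) →
    -- the Lie form θ vanishes on W₃-manifolds
    (∀ z : X, ∑ i, ∑ j, ginv i j * F (b i) (b j) z = 0) →
    -- the identity ‖∇P‖² = 2(τ − τ**), valid on W₃-manifolds
    nP2 = 2 * (tau - tauss) →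
    -- the vanishing of the invariant tensor L
    (∀ x y z : X, Rm x y z + (1 / 2 : ℝ) • Q x y z = 0) →
    nP2 = -8 * tau ∧ tauss = 5 * tau := by
  intro nablaP F nabla2P R4 rho tau tauss nP2 T nablaT Q
  intro hRic hR1 hR2 hR3 hBianchi hW3 hNbar htheta hnorm hL
  -- pointwise lemmas, layer 1
  have hgP : ∀ x y : X, g (P x) y = g x (P y) := by
    intro x y
    have h := hPg x (P y)
    rwa [hP2 y] at h
  have hW3g : ∀ x y z : X, g (nablaP x y) z + g (nablaP y z) x + g (nablaP z x) y = 0 := hW3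
  have hthg : ∀ z : X, (∑ i, ∑ j, ginv i j * g (nablaP (b i) (b j)) z) = 0 := htheta
  have hPP : ∀ x y : X, nablaP x (P y) = - P (nablaP x y) := by
    intro x y
    show nabla x (P (P y)) - P (nabla x (P y)) = - P (nabla x (P y) - P (nabla x y))
    rw [hP2, map_sub, hP2]
    abel
  have hPmap : ∀ x y : X, P (nablaP x y) = - nablaP x (P y) := by
    intro x y; rw [hPP]; abel
  have hnd : ∀ v : X, (∀ w : X, g v w = 0) → v = 0 := by
    intro v hv
    have hrep : ∀ kk : ι, b.repr v kk = 0 := by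
      intro kk
      have h1 : ∀ j, g v (b j) = (∑ i, b.repr v i * g (b i) (b j)) := by
        intro j
        conv_lhs => rw [← b.sum_repr v]
        rw [map_sum, LinearMap.sum_apply]
        exact sum_congr rfl fun i _ => by rw [map_smul, LinearMap.smul_apply, smul_eq_mul]
      have h2 : (∑ j, g v (b j) * ginv j kk) = b.repr v kk := by
        calc (∑ j, g v (b j) * ginv j kk)
            = ∑ j, ∑ i, b.repr v i * g (b i) (b j) * ginv j kk := by
              refine sum_congr rfl fun j _ => ?_
              rw [h1, Finset.sum_mul]
          _ = ∑ i, ∑ j, b.repr v i * g (b i) (b j) * ginv j kk := Finset.sum_comm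
          _ = ∑ i, b.repr v i * ∑ j, g (b i) (b j) * ginv j kk := by
              refine sum_congr rfl fun i _ => ?_
              rw [Finset.mul_sum]
              exact sum_congr rfl fun j _ => by ring
          _ = ∑ i, b.repr v i * (if i = kk then 1 else 0) := by
              exact sum_congr rfl fun i _ => by rw [hginv]
          _ = b.repr v kk := by simp
      rw [← h2]
      simp [hv]
    have hv0 : v = ∑ i, b.repr v i • b i := (b.sum_repr v).symm
    rw [hv0]
    simp [hrep]
  have hnabla_add : ∀ x y z : X, nabla x (y + z) = nabla x y + nabla x z := by
    intro x y z
    have h : ∀ w : X, g (nabla x (y + z) - (nabla x y + nabla x z)) w = 0 := by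
      intro w
      have e1 : g (nabla x (y+z)) w = D x (g (y+z) w) - g (y+z) (nabla x w) := by
        rw [hcompat x (y+z) w]; ring
      have e4 : D x (g (y+z) w) = D x (g y w) + D x (g z w) := by
        rw [map_add, LinearMap.add_apply, hDadd]
      rw [map_sub, map_add, LinearMap.sub_apply, LinearMap.add_apply, e1, e4,
        hcompat x y w, hcompat x z w, map_add, LinearMap.add_apply]
      ring
    have h2 : nabla x (y + z) - (nabla x y + nabla x z) = 0 := hnd _ h
    rw [sub_eq_zero] at h2
    exact h2
  have hD0 : ∀ x : X, D x 0 = 0 := by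
    intro x
    have h := hDadd x 0 0
    simp only [add_zero] at h
    linarith
  have hDneg : ∀ (x : X) (a : ℝ), D x (-a) = - D x a := by
    intro x a
    have h := hDadd x a (-a)
    simp only [add_neg_cancel, hD0] at h
    linarith
  have hcompat' : ∀ x y z : X, g (nabla x y) z = D x (g y z) - g y (nabla x z) := by
    intro x y z; rw [hcompat x y z]; ring
  have hsym23 : ∀ x y z : X, g (nablaP x y) z = g (nablaP x z) y := by
    intro x y z
    have e1 : g (nablaP x y) z
        = D x (g (P y) z) - g (P y) (nabla x z) - g (nabla x y) (P z) := by
      show g (nabla x (P y) - P (nabla x y)) z = _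
      rw [map_sub, LinearMap.sub_apply, hcompat' x (P y) z, hgP (nabla x y) z]
    have e2 : g (nablaP x z) y
        = D x (g (P z) y) - g (P z) (nabla x y) - g (nabla x z) (P y) := by
      show g (nabla x (P z) - P (nabla x z)) y = _
      rw [map_sub, LinearMap.sub_apply, hcompat' x (P z) y, hgP (nabla x z) y]
    rw [e1, e2]
    have e3 : g (P y) z = g (P z) y := by rw [hgP, hgsymm]
    have e4 : g (P y) (nabla x z) = g (nabla x z) (P y) := hgsymm _ _
    have e5 : g (nabla x y) (P z) = g (P z) (nabla x y) := hgsymm _ _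
    rw [e3, e4, e5]
    ring
  have hPg3 : ∀ x y z : X, g (nablaP x (P y)) z = -(g (nablaP x y) (P z)) := by
    intro x y z
    rw [hPP, map_neg, LinearMap.neg_apply, hgP]
  have htog : ∀ x y u v : X,
      g (nablaP x (P y)) (nablaP u v) = g (nablaP x y) (nablaP u (P v)) := by
    intro x y u v
    rw [hPg3]
    have : g (nablaP x y) (P (nablaP u v)) = - g (nablaP x y) (nablaP u (P v)) := by
      rw [hPmap u v, map_neg]
    rw [this]
    ring
  have hNbarg : ∀ x y z : X,
      g (nablaP x (P y)) z + g (nablaP (P x) y) z + g (nablaP y (P x)) z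
        + g (nablaP (P y) x) z = 0 := by
    intro x y z
    have h := hNbar x y
    have h2 := congrArg (fun v => g v z) h
    simpa [map_add, LinearMap.add_apply] using h2
  have hnablaPd : ∀ x y : X, nabla x (P y) = nablaP x y + P (nabla x y) := by
    intro x y
    show nabla x (P y) = (nabla x (P y) - P (nabla x y)) + P (nabla x y)
    abel
  have hnablaP_add : ∀ x y z : X, nablaP x (y + z) = nablaP x y + nablaP x z := by
    intro x y z
    show nabla x (P (y+z)) - P (nabla x (y+z)) = _
    rw [map_add, hnabla_add, hnabla_add, map_add]
    show _ = (nabla x (P y) - P (nabla x y)) + (nabla x (P z) - P (nabla x z))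
    abel
  -- expansion of second covariant derivative
  have E2P : ∀ x y z w : X, g (nabla2P x y z) w
      = D x (g (nablaP y z) w) - g (nablaP y z) (nabla x w)
        - g (nablaP (nabla x y) z) w - g (nablaP y (nabla x z)) w := by
    intro x y z w
    show g (nabla x (nablaP y z) - nablaP (nabla x y) z - nablaP y (nabla x z)) w = _
    rw [map_sub, map_sub, LinearMap.sub_apply, LinearMap.sub_apply,
      hcompat' x (nablaP y z) w]
  have LDFsym : ∀ x y z w : X, g (nabla2P x y z) w = g (nabla2P x y w) z := by
    intro x y z w
    rw [E2P x y z w, E2P x y w z, hsym23 y z w, hsym23 y z (nabla x w),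
      hsym23 (nabla x y) z w, hsym23 y (nabla x z) w]
    ring
  have LDFcyc : ∀ x y z w : X,
      g (nabla2P x y z) w + g (nabla2P x z w) y + g (nabla2P x w y) z = 0 := by
    intro x y z w
    rw [E2P x y z w, E2P x z w y, E2P x w y z]
    have hD : D x (g (nablaP y z) w) + D x (g (nablaP z w) y)
        + D x (g (nablaP w y) z) = 0 := by
      have hc : g (nablaP w y) z = -(g (nablaP y z) w + g (nablaP z w) y) := by
        have h0 := hW3g y z w
        linarith
      rw [hc, hDneg, hDadd]
      ring
    have h1 := hW3g y z (nabla x w)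
    have h2 := hW3g (nabla x y) z w
    have h3 := hW3g y (nabla x z) w
    linarith
  have LDFpm : ∀ a b c d : X,
      g (nabla2P a b (P c)) d + g (nabla2P a b c) (P d)
        + g (nablaP b d) (nablaP a c) + g (nablaP b c) (nablaP a d) = 0 := by
    intro a bb c d
    have e1 : g (nabla2P a bb (P c)) d
        = -(D a (g (nablaP bb c) (P d))) + g (nablaP bb c) (P (nabla a d))
          + g (nablaP (nabla a bb) c) (P d) - g (nablaP bb d) (nablaP a c)
          + g (nablaP bb (nabla a c)) (P d) := by
      rw [E2P a bb (P c) d]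
      have r1 : g (nablaP bb (P c)) d = -(g (nablaP bb c) (P d)) := hPg3 bb c d
      have r2 : g (nablaP bb (P c)) (nabla a d)
          = -(g (nablaP bb c) (P (nabla a d))) := hPg3 bb c (nabla a d)
      have r3 : g (nablaP (nabla a bb) (P c)) d
          = -(g (nablaP (nabla a bb) c) (P d)) := hPg3 (nabla a bb) c d
      have r4 : g (nablaP bb (nabla a (P c))) d
          = g (nablaP bb d) (nablaP a c) - g (nablaP bb (nabla a c)) (P d) := by
        rw [hnablaPd a c, hnablaP_add bb (nablaP a c) (P (nabla a c)),
          map_add, LinearMap.add_apply, hsym23 bb (nablaP a c) d,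
          hPg3 bb (nabla a c) d]
        ring
      rw [r1, r2, r3, r4, hDneg]
      ring
    have e2 : g (nabla2P a bb c) (P d)
        = D a (g (nablaP bb c) (P d)) - g (nablaP bb c) (nablaP a d)
          - g (nablaP bb c) (P (nabla a d)) - g (nablaP (nabla a bb) c) (P d)
          - g (nablaP bb (nabla a c)) (P d) := by
      rw [E2P a bb c (P d)]
      have r5 : g (nablaP bb c) (nabla a (P d))
          = g (nablaP bb c) (nablaP a d) + g (nablaP bb c) (P (nabla a d)) := by
        rw [hnablaPd a d, map_add]
      rw [r5]
      ring
    rw [e1, e2]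
    ring
  have LRic : ∀ x y z w : X, g (nabla2P x y z) w - g (nabla2P y x z) w
      = R4 x y (P z) w - R4 x y z (P w) := by
    intro x y z w
    have h := congrArg (fun v => g v w) (hRic x y z)
    simp only [map_sub, LinearMap.sub_apply] at h
    have h2 : g (P (Rm x y z)) w = g (Rm x y z) (P w) := hgP _ _
    show g (nabla2P x y z) w - g (nabla2P y x z) w
      = g (Rm x y (P z)) w - g (Rm x y z) (P w)
    rw [← h2]
    exact h
  have hTg : ∀ x y v : X, g (T x y) v
      = g (nablaP x y) (P v) + g (nablaP y x) (P v) := by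
    intro x y v
    show g (- nablaP x (P y) - nablaP y (P x)) v = _
    rw [map_sub, map_neg, LinearMap.sub_apply, LinearMap.neg_apply,
      hPg3 x y v, hPg3 y x v]
    ring
  have LTT : ∀ x y z w : X, g (T x (T y z)) w
      = g (nablaP (P w) (P x)) (nablaP y z) + g (nablaP (P w) (P x)) (nablaP z y) := by
    intro x y z w
    have hTvec : T y z = P (nablaP y z) + P (nablaP z y) := by
      show - nablaP y (P z) - nablaP z (P y) = _
      rw [hPP y z, hPP z y]
      abel
    -- key inner evaluation : g (nablaP v (P w')) (T y z) for arbitrary v w'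
    have inner : ∀ v w' : X, g (nablaP v (P w')) (T y z)
        = -(g (nablaP v w') (nablaP y z)) - g (nablaP v w') (nablaP z y) := by
      intro v w'
      rw [hTvec, map_add]
      have i1 : g (nablaP v (P w')) (P (nablaP y z))
          = -(g (nablaP v w') (nablaP y z)) := by
        rw [hPg3 v w' (P (nablaP y z)), hP2]
      have i2 : g (nablaP v (P w')) (P (nablaP z y))
          = -(g (nablaP v w') (nablaP z y)) := by
        rw [hPg3 v w' (P (nablaP z y)), hP2]
      rw [i1, i2]
      ring
    have hmain : g (T x (T y z)) w
        = g (nablaP x (T y z)) (P w) + g (nablaP (T y z) x) (P w) := hTg x (T y z) w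
    have hA : g (nablaP x (T y z)) (P w) = g (nablaP x (P w)) (T y z) :=
      hsym23 x (T y z) (P w)
    have hB : g (nablaP (T y z) x) (P w)
        = -(g (nablaP x (P w)) (T y z)) - g (nablaP (P w) (T y z)) x := by
      have h0 := hW3g (T y z) x (P w)
      linarith
    have hC : g (nablaP (P w) (T y z)) x = g (nablaP (P w) x) (T y z) :=
      hsym23 (P w) (T y z) x
    have hD1 : g (nablaP (P w) x) (T y z)
        = -(g (nablaP (P w) (P x)) (nablaP y z)) - g (nablaP (P w) (P x)) (nablaP z y) := by
      have h0 := inner (P w) (P x)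
      rwa [hP2] at h0
    have hIx : g (nablaP x (P w)) (T y z)
        = -(g (nablaP x w) (nablaP y z)) - g (nablaP x w) (nablaP z y) := inner x w
    rw [hmain, hA, hB, hC, hD1, hIx]
    ring
  have LnT : ∀ x y z w : X, g (nablaT x y z) w
      = g (nabla2P x y z) (P w) + g (nabla2P x z y) (P w)
        + g (nablaP y z) (nablaP x w) + g (nablaP z y) (nablaP x w) := by
    intro x y z w
    have lhs1 : g (nablaT x y z) w
        = D x (g (nablaP y z) (P w)) + D x (g (nablaP z y) (P w))
          - (g (nablaP y z) (P (nabla x w)) + g (nablaP z y) (P (nabla x w)))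
          - (g (nablaP (nabla x y) z) (P w) + g (nablaP z (nabla x y)) (P w))
          - (g (nablaP y (nabla x z)) (P w) + g (nablaP (nabla x z) y) (P w)) := by
      show g (nabla x (T y z) - T (nabla x y) z - T y (nabla x z)) w = _
      rw [map_sub, map_sub, LinearMap.sub_apply, LinearMap.sub_apply,
        hcompat' x (T y z) w, hTg y z (nabla x w), hTg (nabla x y) z w,
        hTg y (nabla x z) w]
      have hDT : D x (g (T y z) w)
          = D x (g (nablaP y z) (P w)) + D x (g (nablaP z y) (P w)) := by
        rw [← hDadd]
        exact congrArg (D x) (hTg y z w)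
      rw [hDT]
    rw [lhs1, E2P x y z (P w), E2P x z y (P w), hnablaPd x w, map_add, map_add]
    ring
  have LQ : ∀ x y z w : X, g (Q x y z) w
      = g (nabla2P x y z) (P w) + g (nabla2P x z y) (P w)
        - g (nabla2P y x z) (P w) - g (nabla2P y z x) (P w)
        + g (nablaP y z) (nablaP x w) + g (nablaP z y) (nablaP x w)
        - g (nablaP x z) (nablaP y w) - g (nablaP z x) (nablaP y w)
        + g (nablaP (P w) (P x)) (nablaP y z) + g (nablaP (P w) (P x)) (nablaP z y)
        - g (nablaP (P w) (P y)) (nablaP x z) - g (nablaP (P w) (P y)) (nablaP z x) := by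
    intro x y z w
    show g (nablaT x y z - nablaT y x z + T x (T y z) - T y (T x z)) w = _
    rw [map_sub, map_add, map_sub, LinearMap.sub_apply, LinearMap.add_apply,
      LinearMap.sub_apply, LnT x y z w, LnT y x z w, LTT x y z w, LTT y x z w]
    ring
  have hL2 : ∀ x y z w : X, g (Q x y z) w = -2 * R4 x y z w := by
    intro x y z w
    have h := hL x y z
    have key : (2:ℝ) * (1/2:ℝ) = 1 := by norm_num
    have h2 : (2:ℝ) • Rm x y z + ((2:ℝ) * (1/2:ℝ)) • Q x y z = 0 := by
      rw [← smul_smul, ← smul_add, h, smul_zero]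
    rw [key, one_smul] at h2
    have h3 : Q x y z = -((2:ℝ) • Rm x y z) := eq_neg_of_add_eq_zero_right h2
    rw [h3, map_neg, map_smul, LinearMap.neg_apply, LinearMap.smul_apply, smul_eq_mul]
    show -(2 * g (Rm x y z) w) = -2 * g (Rm x y z) w
    ring
  -- theta-type vanishing lemmas
  have hth' : ∀ zz : X, (∑ i, ∑ j, ginv i j * g (nablaP (b j) (b i)) zz) = 0 := by
    intro zz
    rw [← S2_swap hginvsymm (fun i j => g (nablaP (b i) (b j)) zz)]
    exact hthg zz
  have hthPa : ∀ zz : X, (∑ i, ∑ j, ginv i j * g (nablaP (b i) (P (b j))) zz) = 0 := by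
    intro zz
    have h0 : ∀ i j : ι, ginv i j * g (nablaP (b i) (P (b j))) zz
        = -(ginv i j * g (nablaP (b i) (b j)) (P zz)) := by
      intro i j; rw [hPg3]; ring
    calc (∑ i, ∑ j, ginv i j * g (nablaP (b i) (P (b j))) zz)
        = ∑ i, ∑ j, -(ginv i j * g (nablaP (b i) (b j)) (P zz)) :=
          sum_congr rfl fun i _ => sum_congr rfl fun j _ => h0 i j
      _ = -(∑ i, ∑ j, ginv i j * g (nablaP (b i) (b j)) (P zz)) := by simp
      _ = 0 := by rw [hthg (P zz)]; ring
  have hthPb : ∀ zz : X, (∑ i, ∑ j, ginv i j * g (nablaP (b j) (P (b i))) zz) = 0 := by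
    intro zz
    rw [← S2_swap hginvsymm (fun i j => g (nablaP (b i) (P (b j))) zz)]
    exact hthPa zz
  have hE : ∀ zz : X, (∑ i, ∑ j, ginv i j * g (nablaP (P (b i)) (b j)) zz) = 0 := by
    intro zz
    have key : (∑ i, ∑ j, (ginv i j * g (nablaP (b i) (P (b j))) zz
        + ginv i j * g (nablaP (P (b i)) (b j)) zz
        + ginv i j * g (nablaP (b j) (P (b i))) zz
        + ginv i j * g (nablaP (P (b j)) (b i)) zz)) = 0 := by
      have h0 : ∀ i j : ι, ginv i j * g (nablaP (b i) (P (b j))) zz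
          + ginv i j * g (nablaP (P (b i)) (b j)) zz
          + ginv i j * g (nablaP (b j) (P (b i))) zz
          + ginv i j * g (nablaP (P (b j)) (b i)) zz = 0 := by
        intro i j
        have h := hNbarg (b i) (b j) zz
        calc ginv i j * g (nablaP (b i) (P (b j))) zz
            + ginv i j * g (nablaP (P (b i)) (b j)) zz
            + ginv i j * g (nablaP (b j) (P (b i))) zz
            + ginv i j * g (nablaP (P (b j)) (b i)) zz
            = ginv i j * (g (nablaP (b i) (P (b j))) zz
              + g (nablaP (P (b i)) (b j)) zz
              + g (nablaP (b j) (P (b i))) zz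
              + g (nablaP (P (b j)) (b i)) zz) := by ring
          _ = 0 := by rw [h, mul_zero]
      simp [h0]
    rw [S2_add, S2_add, S2_add] at key
    have hswap : (∑ i, ∑ j, ginv i j * g (nablaP (P (b j)) (b i)) zz)
        = ∑ i, ∑ j, ginv i j * g (nablaP (P (b i)) (b j)) zz := by
      rw [← S2_swap hginvsymm (fun i j => g (nablaP (P (b i)) (b j)) zz)]
    have h1 := hthPa zz
    have h2 := hthPb zz
    linarith
  have hE2 : ∀ zz : X, (∑ i, ∑ j, ginv i j * g (nablaP (P (b i)) (P (b j))) zz) = 0 := by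
    intro zz
    have h0 : ∀ i j : ι, ginv i j * g (nablaP (P (b i)) (P (b j))) zz
        = -(ginv i j * g (nablaP (P (b i)) (b j)) (P zz)) := by
      intro i j; rw [hPg3]; ring
    calc (∑ i, ∑ j, ginv i j * g (nablaP (P (b i)) (P (b j))) zz)
        = ∑ i, ∑ j, -(ginv i j * g (nablaP (P (b i)) (b j)) (P zz)) :=
          sum_congr rfl fun i _ => sum_congr rfl fun j _ => h0 i j
      _ = -(∑ i, ∑ j, ginv i j * g (nablaP (P (b i)) (b j)) (P zz)) := by simp
      _ = 0 := by rw [hE (P zz)]; ring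
  -- canonical scalar variables
  set A : ℝ := S4 ginv (fun i j k l => g (nablaP (b i) (b k)) (nablaP (b j) (b l))) with hAdef
  set F2 : ℝ := S4 ginv (fun i j k l => g (nablaP (b i) (b k)) (nablaP (P (b j)) (P (b l)))) with hF2def
  set F3 : ℝ := S4 ginv (fun i j k l => g (nablaP (b i) (b k)) (nablaP (b l) (b j))) with hF3def
  set F4 : ℝ := S4 ginv (fun i j k l => g (nablaP (b i) (b k)) (nablaP (P (b l)) (P (b j)))) with hF4def
  set D1 : ℝ := S4 ginv (fun i j k l => g (nabla2P (b i) (b j) (b k)) (P (b l))) with hD1def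
  set D2 : ℝ := S4 ginv (fun i j k l => g (nabla2P (b i) (b k) (b j)) (P (b l))) with hD2def
  set D3 : ℝ := S4 ginv (fun i j k l => g (nabla2P (b i) (P (b k)) (b j)) (b l)) with hD3def
  set D4 : ℝ := S4 ginv (fun i j k l => g (nabla2P (b i) (P (b j)) (b k)) (b l)) with hD4def
  set D5 : ℝ := S4 ginv (fun i j k l => g (nabla2P (b i) (b k) (P (b j))) (b l)) with hD5def
  set D6 : ℝ := S4 ginv (fun i j k l => g (nabla2P (P (b i)) (b j) (b k)) (b l)) with hD6def
  set D7 : ℝ := S4 ginv (fun i j k l => g (nabla2P (P (b i)) (b k) (b j)) (b l)) with hD7def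
  set R1v : ℝ := S4 ginv (fun i j k l => R4 (b i) (P (b j)) (b k) (P (b l))) with hR1def
  set R2v : ℝ := S4 ginv (fun i j k l => R4 (b i) (b k) (P (b j)) (P (b l))) with hR2def
  set R3v : ℝ := S4 ginv (fun i j k l => R4 (b i) (b k) (b j) (b l)) with hR3def
  set R4v : ℝ := S4 ginv (fun i j k l => R4 (b i) (P (b k)) (P (b j)) (b l)) with hR4def
  set R5v : ℝ := S4 ginv (fun i j k l => R4 (b i) (P (b k)) (b j) (P (b l))) with hR5def
  -- conversions
  have hnPA : nP2 = A := by rw [hAdef]; rfl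
  have htauR : tau = -R3v := by
    have h1 : tau = S4 ginv (fun i j k l => R4 (b i) (b k) (b l) (b j)) := by
      rw [S4_eq_kl]
    rw [h1, hR3def]
    calc S4 ginv (fun i j k l => R4 (b i) (b k) (b l) (b j))
        = S4 ginv (fun i j k l => -(R4 (b i) (b k) (b j) (b l))) :=
          S4_congr (fun i j k l => hR2 (b i) (b k) (b l) (b j))
      _ = - S4 ginv (fun i j k l => R4 (b i) (b k) (b j) (b l)) := S4_neg _
  have htssR : tauss = -R2v := by
    have h1 : tauss = S4 ginv (fun i j k l => R4 (b i) (b k) (P (b l)) (P (b j))) := rfl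
    rw [h1, hR2def]
    calc S4 ginv (fun i j k l => R4 (b i) (b k) (P (b l)) (P (b j)))
        = S4 ginv (fun i j k l => -(R4 (b i) (b k) (P (b j)) (P (b l)))) :=
          S4_congr (fun i j k l => hR2 (b i) (b k) (P (b l)) (P (b j)))
      _ = - S4 ginv (fun i j k l => R4 (b i) (b k) (P (b j)) (P (b l))) := S4_neg _
  -- ROW 1 : pmove at (i,j,k,l) : 2*D1 + 2*A = 0
  have row1 : D1 = -A := by
    have h0 : S4 ginv (fun i j k l =>
        g (nabla2P (b i) (b j) (P (b k))) (b l)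
        + g (nabla2P (b i) (b j) (b k)) (P (b l))
        + g (nablaP (b j) (b l)) (nablaP (b i) (b k))
        + g (nablaP (b j) (b k)) (nablaP (b i) (b l))) = 0 :=
      (S4_congr (fun i j k l => LDFpm (b i) (b j) (b k) (b l))).trans S4_zero
    rw [S4_add, S4_add, S4_add] at h0
    have e1 : S4 ginv (fun i j k l => g (nabla2P (b i) (b j) (P (b k))) (b l)) = D1 := by
      rw [hD1def]
      calc S4 ginv (fun i j k l => g (nabla2P (b i) (b j) (P (b k))) (b l))
          = S4 ginv (fun i j k l => g (nabla2P (b i) (b j) (b l)) (P (b k))) :=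
            S4_congr (fun i j k l => LDFsym (b i) (b j) (P (b k)) (b l))
        _ = S4 ginv (fun i j k l => g (nabla2P (b i) (b j) (b k)) (P (b l))) :=
            S4_kl hginvsymm _
    have e2 : S4 ginv (fun i j k l => g (nabla2P (b i) (b j) (b k)) (P (b l))) = D1 :=
      hD1def.symm
    have e3 : S4 ginv (fun i j k l => g (nablaP (b j) (b l)) (nablaP (b i) (b k))) = A := by
      rw [hAdef]
      exact S4_congr (fun i j k l => hgsymm _ _)
    have e4 : S4 ginv (fun i j k l => g (nablaP (b j) (b k)) (nablaP (b i) (b l))) = A := by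
      rw [hAdef]
      calc S4 ginv (fun i j k l => g (nablaP (b j) (b k)) (nablaP (b i) (b l)))
          = S4 ginv (fun i j k l => g (nablaP (b i) (b l)) (nablaP (b j) (b k))) :=
            S4_congr (fun i j k l => hgsymm _ _)
        _ = S4 ginv (fun i j k l => g (nablaP (b i) (b k)) (nablaP (b j) (b l))) :=
            S4_kl hginvsymm _
    rw [e1, e2, e3, e4] at h0
    linarith
  -- ROW 2 : cyclic at (i; j, k, P l) : D1 + D2 + D3 = 0
  have row2 : D1 + D2 + D3 = 0 := by
    have h0 : S4 ginv (fun i j k l =>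
        g (nabla2P (b i) (b j) (b k)) (P (b l))
        + g (nabla2P (b i) (b k) (P (b l))) (b j)
        + g (nabla2P (b i) (P (b l)) (b j)) (b k)) = 0 :=
      (S4_congr (fun i j k l => LDFcyc (b i) (b j) (b k) (P (b l)))).trans S4_zero
    rw [S4_add, S4_add] at h0
    have e2 : S4 ginv (fun i j k l => g (nabla2P (b i) (b k) (P (b l))) (b j)) = D2 := by
      rw [hD2def]
      exact S4_congr (fun i j k l => LDFsym (b i) (b k) (P (b l)) (b j))
    have e3 : S4 ginv (fun i j k l => g (nabla2P (b i) (P (b l)) (b j)) (b k)) = D3 := by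
      rw [hD3def]
      exact S4_kl hginvsymm _
    rw [← hD1def, e2, e3] at h0
    linarith
  -- ROW 3 : cyclic at (i; P j, k, l) : D4 + 2*D5 = 0
  have row3 : D4 + 2*D5 = 0 := by
    have h0 : S4 ginv (fun i j k l =>
        g (nabla2P (b i) (P (b j)) (b k)) (b l)
        + g (nabla2P (b i) (b k) (b l)) (P (b j))
        + g (nabla2P (b i) (b l) (P (b j))) (b k)) = 0 :=
      (S4_congr (fun i j k l => LDFcyc (b i) (P (b j)) (b k) (b l))).trans S4_zero
    rw [S4_add, S4_add] at h0
    have e2 : S4 ginv (fun i j k l => g (nabla2P (b i) (b k) (b l)) (P (b j))) = D5 := by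
      rw [hD5def]
      exact S4_congr (fun i j k l => LDFsym (b i) (b k) (b l) (P (b j)))
    have e3 : S4 ginv (fun i j k l => g (nabla2P (b i) (b l) (P (b j))) (b k)) = D5 := by
      rw [hD5def]
      calc S4 ginv (fun i j k l => g (nabla2P (b i) (b l) (P (b j))) (b k))
          = S4 ginv (fun i j k l => g (nabla2P (b i) (b l) (b k)) (P (b j))) :=
            S4_congr (fun i j k l => LDFsym (b i) (b l) (P (b j)) (b k))
        _ = S4 ginv (fun i j k l => g (nabla2P (b i) (b k) (b l)) (P (b j))) :=
            S4_kl hginvsymm _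
        _ = S4 ginv (fun i j k l => g (nabla2P (b i) (b k) (P (b j))) (b l)) :=
            S4_congr (fun i j k l => LDFsym (b i) (b k) (b l) (P (b j)))
    rw [← hD4def, e2, e3] at h0
    linarith
  -- ROW 4 : Ricci at (i, P j, k, l) : D4 - D6 + 2*R1v = 0
  have row4 : D4 - D6 + 2*R1v = 0 := by
    have hpt : ∀ i j k l : ι,
        g (nabla2P (b i) (P (b j)) (b k)) (b l)
          + (-(g (nabla2P (P (b j)) (b i) (b k)) (b l))
          + (-(R4 (b i) (P (b j)) (P (b k)) (b l))
          + R4 (b i) (P (b j)) (b k) (P (b l)))) = 0 := by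
      intro i j k l
      have h := LRic (b i) (P (b j)) (b k) (b l)
      linarith
    have h0 := (S4_congr hpt).trans (S4_zero (ginv := ginv))
    rw [S4_add, S4_add, S4_add, S4_neg, S4_neg] at h0
    have e2 : S4 ginv (fun i j k l => g (nabla2P (P (b j)) (b i) (b k)) (b l)) = D6 := by
      rw [hD6def]
      exact S4_ij hginvsymm _
    have e3 : S4 ginv (fun i j k l => R4 (b i) (P (b j)) (P (b k)) (b l)) = -R1v := by
      rw [hR1def]
      calc S4 ginv (fun i j k l => R4 (b i) (P (b j)) (P (b k)) (b l))
          = S4 ginv (fun i j k l => R4 (P (b k)) (b l) (b i) (P (b j))) :=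
            S4_congr (fun i j k l => hR3 (b i) (P (b j)) (P (b k)) (b l))
        _ = S4 ginv (fun i j k l => R4 (P (b i)) (b j) (b k) (P (b l))) :=
            S4_pair _
        _ = S4 ginv (fun i j k l => -(R4 (b j) (P (b i)) (b k) (P (b l)))) :=
            S4_congr (fun i j k l => hR1 (P (b i)) (b j) (b k) (P (b l)))
        _ = - S4 ginv (fun i j k l => R4 (b j) (P (b i)) (b k) (P (b l))) := S4_neg _
        _ = - S4 ginv (fun i j k l => R4 (b i) (P (b j)) (b k) (P (b l))) := by
            rw [S4_ij hginvsymm (fun i j k l => R4 (b i) (P (b j)) (b k) (P (b l)))]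
    rw [← hD4def, e2, e3, ← hR1def] at h0
    linarith
  -- ROW 5 : Bianchi at (i, P j, k, P l) : R1v + R4v - R2v = 0
  have row5 : R1v + R4v - R2v = 0 := by
    have h0 : S4 ginv (fun i j k l =>
        R4 (b i) (P (b j)) (b k) (P (b l))
        + R4 (P (b j)) (b k) (b i) (P (b l))
        + R4 (b k) (b i) (P (b j)) (P (b l))) = 0 :=
      (S4_congr (fun i j k l => hBianchi (b i) (P (b j)) (b k) (P (b l)))).trans S4_zero
    rw [S4_add, S4_add] at h0
    have e2 : S4 ginv (fun i j k l => R4 (P (b j)) (b k) (b i) (P (b l))) = R4v := by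
      rw [hR4def]
      calc S4 ginv (fun i j k l => R4 (P (b j)) (b k) (b i) (P (b l)))
          = S4 ginv (fun i j k l => R4 (b i) (P (b l)) (P (b j)) (b k)) :=
            S4_congr (fun i j k l => hR3 (P (b j)) (b k) (b i) (P (b l)))
        _ = S4 ginv (fun i j k l => R4 (b i) (P (b k)) (P (b j)) (b l)) :=
            S4_kl hginvsymm _
    have e3 : S4 ginv (fun i j k l => R4 (b k) (b i) (P (b j)) (P (b l))) = -R2v := by
      rw [hR2def]
      calc S4 ginv (fun i j k l => R4 (b k) (b i) (P (b j)) (P (b l)))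
          = S4 ginv (fun i j k l => -(R4 (b i) (b k) (P (b j)) (P (b l)))) :=
            S4_congr (fun i j k l => hR1 (b k) (b i) (P (b j)) (P (b l)))
        _ = - S4 ginv (fun i j k l => R4 (b i) (b k) (P (b j)) (P (b l))) := S4_neg _
    rw [← hR1def, e2, e3] at h0
    linarith
  -- ROW 6 : cyclic at (P i; j, k, l) : D6 + 2*D7 = 0
  have row6 : D6 + 2*D7 = 0 := by
    have h0 : S4 ginv (fun i j k l =>
        g (nabla2P (P (b i)) (b j) (b k)) (b l)
        + g (nabla2P (P (b i)) (b k) (b l)) (b j)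
        + g (nabla2P (P (b i)) (b l) (b j)) (b k)) = 0 :=
      (S4_congr (fun i j k l => LDFcyc (P (b i)) (b j) (b k) (b l))).trans S4_zero
    rw [S4_add, S4_add] at h0
    have e2 : S4 ginv (fun i j k l => g (nabla2P (P (b i)) (b k) (b l)) (b j)) = D7 := by
      rw [hD7def]
      exact S4_congr (fun i j k l => LDFsym (P (b i)) (b k) (b l) (b j))
    have e3 : S4 ginv (fun i j k l => g (nabla2P (P (b i)) (b l) (b j)) (b k)) = D7 := by
      rw [hD7def]
      exact S4_kl hginvsymm _
    rw [← hD6def, e2, e3] at h0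
    linarith
  -- ROW 7 : Nbar-type : F2 + F4 + A + F3 = 0
  have row7 : F2 + F4 + A + F3 = 0 := by
    have h0 : S4 ginv (fun i j k l =>
        g (nablaP (b i) (P (b k))) (nablaP (b j) (P (b l)))
        + g (nablaP (P (b i)) (b k)) (nablaP (b j) (P (b l)))
        + g (nablaP (b k) (P (b i))) (nablaP (b j) (P (b l)))
        + g (nablaP (P (b k)) (b i)) (nablaP (b j) (P (b l)))) = 0 := by
      refine (S4_congr (fun i j k l => hNbarg (b i) (b k) (nablaP (b j) (P (b l))))).trans S4_zero
    rw [S4_add, S4_add, S4_add] at h0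
    have e1 : S4 ginv (fun i j k l => g (nablaP (b i) (P (b k))) (nablaP (b j) (P (b l)))) = A := by
      rw [hAdef]
      calc S4 ginv (fun i j k l => g (nablaP (b i) (P (b k))) (nablaP (b j) (P (b l))))
          = S4 ginv (fun i j k l => g (nablaP (b i) (b k)) (nablaP (b j) (P (P (b l))))) :=
            S4_congr (fun i j k l => htog (b i) (b k) (b j) (P (b l)))
        _ = S4 ginv (fun i j k l => g (nablaP (b i) (b k)) (nablaP (b j) (b l))) :=
            S4_congr (fun i j k l => by rw [hP2])
    have e2 : S4 ginv (fun i j k l => g (nablaP (P (b i)) (b k)) (nablaP (b j) (P (b l)))) = F2 := by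
      rw [hF2def]
      calc S4 ginv (fun i j k l => g (nablaP (P (b i)) (b k)) (nablaP (b j) (P (b l))))
          = S4 ginv (fun i j k l => g (nablaP (b j) (P (b l))) (nablaP (P (b i)) (b k))) :=
            S4_congr (fun i j k l => hgsymm _ _)
        _ = S4 ginv (fun i j k l => g (nablaP (b j) (b l)) (nablaP (P (b i)) (P (b k)))) :=
            S4_congr (fun i j k l => htog (b j) (b l) (P (b i)) (b k))
        _ = S4 ginv (fun i j k l => g (nablaP (b i) (b l)) (nablaP (P (b j)) (P (b k)))) :=
            S4_ij hginvsymm _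
        _ = S4 ginv (fun i j k l => g (nablaP (b i) (b k)) (nablaP (P (b j)) (P (b l)))) :=
            S4_kl hginvsymm _
    have e3 : S4 ginv (fun i j k l => g (nablaP (b k) (P (b i))) (nablaP (b j) (P (b l)))) = F3 := by
      rw [hF3def]
      calc S4 ginv (fun i j k l => g (nablaP (b k) (P (b i))) (nablaP (b j) (P (b l))))
          = S4 ginv (fun i j k l => g (nablaP (b k) (b i)) (nablaP (b j) (P (P (b l))))) :=
            S4_congr (fun i j k l => htog (b k) (b i) (b j) (P (b l)))
        _ = S4 ginv (fun i j k l => g (nablaP (b k) (b i)) (nablaP (b j) (b l))) :=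
            S4_congr (fun i j k l => by rw [hP2])
        _ = S4 ginv (fun i j k l => g (nablaP (b i) (b k)) (nablaP (b l) (b j))) :=
            S4_pair _
    have e4 : S4 ginv (fun i j k l => g (nablaP (P (b k)) (b i)) (nablaP (b j) (P (b l)))) = F4 := by
      rw [hF4def]
      calc S4 ginv (fun i j k l => g (nablaP (P (b k)) (b i)) (nablaP (b j) (P (b l))))
          = S4 ginv (fun i j k l => g (nablaP (b j) (P (b l))) (nablaP (P (b k)) (b i))) :=
            S4_congr (fun i j k l => hgsymm _ _)
        _ = S4 ginv (fun i j k l => g (nablaP (b j) (b l)) (nablaP (P (b k)) (P (b i)))) :=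
            S4_congr (fun i j k l => htog (b j) (b l) (P (b k)) (b i))
        _ = S4 ginv (fun i j k l => g (nablaP (b i) (b l)) (nablaP (P (b k)) (P (b j)))) :=
            S4_ij hginvsymm _
        _ = S4 ginv (fun i j k l => g (nablaP (b i) (b k)) (nablaP (P (b l)) (P (b j)))) :=
            S4_kl hginvsymm _
    rw [e1, e2, e3, e4] at h0
    linarith
  -- ROW 8 : Ricci at (i, k, j, P l) : D2 - D5 - R2v + R3v = 0
  have row8 : D2 - D5 - R2v + R3v = 0 := by
    have hpt : ∀ i j k l : ι,
        g (nabla2P (b i) (b k) (b j)) (P (b l))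
        + (-(g (nabla2P (b k) (b i) (b j)) (P (b l)))
        + (-(R4 (b i) (b k) (P (b j)) (P (b l)))
        + R4 (b i) (b k) (b j) (P (P (b l))))) = 0 := by
      intro i j k l
      have h := LRic (b i) (b k) (b j) (P (b l))
      linarith
    have h0 := (S4_congr hpt).trans (S4_zero (ginv := ginv))
    rw [S4_add, S4_add, S4_add, S4_neg, S4_neg] at h0
    have e2 : S4 ginv (fun i j k l => g (nabla2P (b k) (b i) (b j)) (P (b l))) = D5 := by
      rw [hD5def]
      calc S4 ginv (fun i j k l => g (nabla2P (b k) (b i) (b j)) (P (b l)))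
          = S4 ginv (fun i j k l => g (nabla2P (b i) (b k) (b l)) (P (b j))) :=
            S4_pair _
        _ = S4 ginv (fun i j k l => g (nabla2P (b i) (b k) (P (b j))) (b l)) :=
            S4_congr (fun i j k l => LDFsym (b i) (b k) (b l) (P (b j)))
    have e4 : S4 ginv (fun i j k l => R4 (b i) (b k) (b j) (P (P (b l)))) = R3v := by
      rw [hR3def]
      exact S4_congr (fun i j k l => by rw [hP2])
    rw [← hD2def, e2, ← hR2def, e4] at h0
    linarith
  -- ROW 9 : Ricci at (i, P k, j, l) : D3 - D7 - R4v + R5v = 0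
  have row9 : D3 - D7 - R4v + R5v = 0 := by
    have hpt : ∀ i j k l : ι,
        g (nabla2P (b i) (P (b k)) (b j)) (b l)
        + (-(g (nabla2P (P (b k)) (b i) (b j)) (b l))
        + (-(R4 (b i) (P (b k)) (P (b j)) (b l))
        + R4 (b i) (P (b k)) (b j) (P (b l)))) = 0 := by
      intro i j k l
      have h := LRic (b i) (P (b k)) (b j) (b l)
      linarith
    have h0 := (S4_congr hpt).trans (S4_zero (ginv := ginv))
    rw [S4_add, S4_add, S4_add, S4_neg, S4_neg] at h0
    have e2 : S4 ginv (fun i j k l => g (nabla2P (P (b k)) (b i) (b j)) (b l)) = D7 := by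
      rw [hD7def]
      calc S4 ginv (fun i j k l => g (nabla2P (P (b k)) (b i) (b j)) (b l))
          = S4 ginv (fun i j k l => g (nabla2P (P (b i)) (b k) (b l)) (b j)) :=
            S4_pair _
        _ = S4 ginv (fun i j k l => g (nabla2P (P (b i)) (b k) (b j)) (b l)) :=
            S4_congr (fun i j k l => LDFsym (P (b i)) (b k) (b l) (b j))
    rw [← hD3def, e2, ← hR4def, ← hR5def] at h0
    linarith
  -- extra vanishing forms
  have hE' : ∀ zz : X, (∑ i, ∑ j, ginv i j * g (nablaP (P (b j)) (b i)) zz) = 0 := by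
    intro zz
    rw [← S2_swap hginvsymm (fun i j => g (nablaP (P (b i)) (b j)) zz)]
    exact hE zz
  -- ROW 10 : L-contraction at (i, k, P l, P j)
  have row10 : D2 + D3 - D5 - D4 - F3 - F2 - A - F4 - 2*R2v = 0 := by
    have hpt : ∀ i j k l : ι,
        g (nabla2P (b i) (b k) (P (b l))) (P (P (b j)))
        + (g (nabla2P (b i) (P (b l)) (b k)) (P (P (b j)))
        + (-(g (nabla2P (b k) (b i) (P (b l))) (P (P (b j))))
        + (-(g (nabla2P (b k) (P (b l)) (b i)) (P (P (b j))))
        + (g (nablaP (b k) (P (b l))) (nablaP (b i) (P (b j)))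
        + (g (nablaP (P (b l)) (b k)) (nablaP (b i) (P (b j)))
        + (-(g (nablaP (b i) (P (b l))) (nablaP (b k) (P (b j))))
        + (-(g (nablaP (P (b l)) (b i)) (nablaP (b k) (P (b j))))
        + (g (nablaP (P (P (b j))) (P (b i))) (nablaP (b k) (P (b l)))
        + (g (nablaP (P (P (b j))) (P (b i))) (nablaP (P (b l)) (b k))
        + (-(g (nablaP (P (P (b j))) (P (b k))) (nablaP (b i) (P (b l))))
        + (-(g (nablaP (P (P (b j))) (P (b k))) (nablaP (P (b l)) (b i)))
        + 2 * R4 (b i) (b k) (P (b l)) (P (b j))))))))))))) = 0 := by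
      intro i j k l
      have h1 := LQ (b i) (b k) (P (b l)) (P (b j))
      have h2 := hL2 (b i) (b k) (P (b l)) (P (b j))
      linarith
    have h0 := (S4_congr hpt).trans (S4_zero (ginv := ginv))
    rw [S4_add, S4_add, S4_add, S4_add, S4_add, S4_add, S4_add, S4_add, S4_add,
      S4_add, S4_add, S4_add, S4_neg, S4_neg, S4_neg, S4_neg, S4_neg, S4_neg,
      S4_cmul] at h0
    have e1 : S4 ginv (fun i j k l => g (nabla2P (b i) (b k) (P (b l))) (P (P (b j)))) = D2 := by
      rw [hD2def]
      calc S4 ginv (fun i j k l => g (nabla2P (b i) (b k) (P (b l))) (P (P (b j))))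
          = S4 ginv (fun i j k l => g (nabla2P (b i) (b k) (P (b l))) (b j)) :=
            S4_congr (fun i j k l => by rw [hP2])
        _ = S4 ginv (fun i j k l => g (nabla2P (b i) (b k) (b j)) (P (b l))) :=
            S4_congr (fun i j k l => LDFsym (b i) (b k) (P (b l)) (b j))
    have e2 : S4 ginv (fun i j k l => g (nabla2P (b i) (P (b l)) (b k)) (P (P (b j)))) = D3 := by
      rw [hD3def]
      calc S4 ginv (fun i j k l => g (nabla2P (b i) (P (b l)) (b k)) (P (P (b j))))
          = S4 ginv (fun i j k l => g (nabla2P (b i) (P (b l)) (b k)) (b j)) :=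
            S4_congr (fun i j k l => by rw [hP2])
        _ = S4 ginv (fun i j k l => g (nabla2P (b i) (P (b k)) (b l)) (b j)) :=
            S4_kl hginvsymm _
        _ = S4 ginv (fun i j k l => g (nabla2P (b i) (P (b k)) (b j)) (b l)) :=
            S4_congr (fun i j k l => LDFsym (b i) (P (b k)) (b l) (b j))
    have e3 : S4 ginv (fun i j k l => g (nabla2P (b k) (b i) (P (b l))) (P (P (b j)))) = D5 := by
      rw [hD5def]
      calc S4 ginv (fun i j k l => g (nabla2P (b k) (b i) (P (b l))) (P (P (b j))))
          = S4 ginv (fun i j k l => g (nabla2P (b k) (b i) (P (b l))) (b j)) :=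
            S4_congr (fun i j k l => by rw [hP2])
        _ = S4 ginv (fun i j k l => g (nabla2P (b i) (b k) (P (b j))) (b l)) :=
            S4_pair _
    have e4 : S4 ginv (fun i j k l => g (nabla2P (b k) (P (b l)) (b i)) (P (P (b j)))) = D4 := by
      rw [hD4def]
      calc S4 ginv (fun i j k l => g (nabla2P (b k) (P (b l)) (b i)) (P (P (b j))))
          = S4 ginv (fun i j k l => g (nabla2P (b k) (P (b l)) (b i)) (b j)) :=
            S4_congr (fun i j k l => by rw [hP2])
        _ = S4 ginv (fun i j k l => g (nabla2P (b i) (P (b j)) (b k)) (b l)) :=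
            S4_pair _
    have e5 : S4 ginv (fun i j k l => g (nablaP (b k) (P (b l))) (nablaP (b i) (P (b j)))) = 0 :=
      S4_zero_of_kl _ (fun i j => hthPa (nablaP (b i) (P (b j))))
    have e6 : S4 ginv (fun i j k l => g (nablaP (P (b l)) (b k)) (nablaP (b i) (P (b j)))) = 0 :=
      S4_zero_of_kl _ (fun i j => hE' (nablaP (b i) (P (b j))))
    have e7 : S4 ginv (fun i j k l => g (nablaP (b i) (P (b l))) (nablaP (b k) (P (b j)))) = F3 := by
      rw [hF3def]
      calc S4 ginv (fun i j k l => g (nablaP (b i) (P (b l))) (nablaP (b k) (P (b j))))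
          = S4 ginv (fun i j k l => g (nablaP (b i) (b l)) (nablaP (b k) (P (P (b j))))) :=
            S4_congr (fun i j k l => htog (b i) (b l) (b k) (P (b j)))
        _ = S4 ginv (fun i j k l => g (nablaP (b i) (b l)) (nablaP (b k) (b j))) :=
            S4_congr (fun i j k l => by rw [hP2])
        _ = S4 ginv (fun i j k l => g (nablaP (b i) (b k)) (nablaP (b l) (b j))) :=
            S4_kl hginvsymm _
    have e8 : S4 ginv (fun i j k l => g (nablaP (P (b l)) (b i)) (nablaP (b k) (P (b j)))) = F2 := by
      rw [hF2def]
      calc S4 ginv (fun i j k l => g (nablaP (P (b l)) (b i)) (nablaP (b k) (P (b j))))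
          = S4 ginv (fun i j k l => g (nablaP (b k) (P (b j))) (nablaP (P (b l)) (b i))) :=
            S4_congr (fun i j k l => hgsymm _ _)
        _ = S4 ginv (fun i j k l => g (nablaP (b k) (b j)) (nablaP (P (b l)) (P (b i)))) :=
            S4_congr (fun i j k l => htog (b k) (b j) (P (b l)) (b i))
        _ = S4 ginv (fun i j k l => g (nablaP (b i) (b l)) (nablaP (P (b j)) (P (b k)))) :=
            S4_pair _
        _ = S4 ginv (fun i j k l => g (nablaP (b i) (b k)) (nablaP (P (b j)) (P (b l)))) :=
            S4_kl hginvsymm _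
    have e9 : S4 ginv (fun i j k l => g (nablaP (P (P (b j))) (P (b i))) (nablaP (b k) (P (b l)))) = 0 := by
      have h1 : S4 ginv (fun i j k l => g (nablaP (P (P (b j))) (P (b i))) (nablaP (b k) (P (b l))))
          = S4 ginv (fun i j k l => g (nablaP (b j) (P (b i))) (nablaP (b k) (P (b l)))) :=
        S4_congr (fun i j k l => by rw [hP2])
      rw [h1]
      exact S4_zero_of_ij _ (fun k l => hthPb (nablaP (b k) (P (b l))))
    have e10 : S4 ginv (fun i j k l => g (nablaP (P (P (b j))) (P (b i))) (nablaP (P (b l)) (b k))) = 0 := by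
      have h1 : S4 ginv (fun i j k l => g (nablaP (P (P (b j))) (P (b i))) (nablaP (P (b l)) (b k)))
          = S4 ginv (fun i j k l => g (nablaP (b j) (P (b i))) (nablaP (P (b l)) (b k))) :=
        S4_congr (fun i j k l => by rw [hP2])
      rw [h1]
      exact S4_zero_of_ij _ (fun k l => hthPb (nablaP (P (b l)) (b k)))
    have e11 : S4 ginv (fun i j k l => g (nablaP (P (P (b j))) (P (b k))) (nablaP (b i) (P (b l)))) = A := by
      rw [hAdef]
      calc S4 ginv (fun i j k l => g (nablaP (P (P (b j))) (P (b k))) (nablaP (b i) (P (b l))))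
          = S4 ginv (fun i j k l => g (nablaP (b j) (P (b k))) (nablaP (b i) (P (b l)))) :=
            S4_congr (fun i j k l => by rw [hP2])
        _ = S4 ginv (fun i j k l => g (nablaP (b j) (b k)) (nablaP (b i) (P (P (b l))))) :=
            S4_congr (fun i j k l => htog (b j) (b k) (b i) (P (b l)))
        _ = S4 ginv (fun i j k l => g (nablaP (b j) (b k)) (nablaP (b i) (b l))) :=
            S4_congr (fun i j k l => by rw [hP2])
        _ = S4 ginv (fun i j k l => g (nablaP (b i) (b k)) (nablaP (b j) (b l))) :=
            S4_ij hginvsymm _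
    have e12 : S4 ginv (fun i j k l => g (nablaP (P (P (b j))) (P (b k))) (nablaP (P (b l)) (b i))) = F4 := by
      rw [hF4def]
      calc S4 ginv (fun i j k l => g (nablaP (P (P (b j))) (P (b k))) (nablaP (P (b l)) (b i)))
          = S4 ginv (fun i j k l => g (nablaP (b j) (P (b k))) (nablaP (P (b l)) (b i))) :=
            S4_congr (fun i j k l => by rw [hP2])
        _ = S4 ginv (fun i j k l => g (nablaP (b j) (b k)) (nablaP (P (b l)) (P (b i)))) :=
            S4_congr (fun i j k l => htog (b j) (b k) (P (b l)) (b i))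
        _ = S4 ginv (fun i j k l => g (nablaP (b i) (b k)) (nablaP (P (b l)) (P (b j)))) :=
            S4_ij hginvsymm _
    have e13 : S4 ginv (fun i j k l => R4 (b i) (b k) (P (b l)) (P (b j))) = -R2v := by
      rw [hR2def]
      calc S4 ginv (fun i j k l => R4 (b i) (b k) (P (b l)) (P (b j)))
          = S4 ginv (fun i j k l => -(R4 (b i) (b k) (P (b j)) (P (b l)))) :=
            S4_congr (fun i j k l => hR2 (b i) (b k) (P (b l)) (P (b j)))
        _ = - S4 ginv (fun i j k l => R4 (b i) (b k) (P (b j)) (P (b l))) := S4_neg _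
    rw [e1, e2, e3, e4, e5, e6, e7, e8, e9, e10, e11, e12, e13] at h0
    linarith
  -- ROW 11 : L-contraction at (i, P k, l, P j)
  have row11 : D3 + D2 - D7 - D6 - F4 - F2 - A - F3 - 2*R4v = 0 := by
    have hpt : ∀ i j k l : ι,
        g (nabla2P (b i) (P (b k)) (b l)) (P (P (b j)))
        + (g (nabla2P (b i) (b l) (P (b k))) (P (P (b j)))
        + (-(g (nabla2P (P (b k)) (b i) (b l)) (P (P (b j))))
        + (-(g (nabla2P (P (b k)) (b l) (b i)) (P (P (b j))))
        + (g (nablaP (P (b k)) (b l)) (nablaP (b i) (P (b j)))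
        + (g (nablaP (b l) (P (b k))) (nablaP (b i) (P (b j)))
        + (-(g (nablaP (b i) (b l)) (nablaP (P (b k)) (P (b j))))
        + (-(g (nablaP (b l) (b i)) (nablaP (P (b k)) (P (b j))))
        + (g (nablaP (P (P (b j))) (P (b i))) (nablaP (P (b k)) (b l))
        + (g (nablaP (P (P (b j))) (P (b i))) (nablaP (b l) (P (b k)))
        + (-(g (nablaP (P (P (b j))) (P (P (b k)))) (nablaP (b i) (b l)))
        + (-(g (nablaP (P (P (b j))) (P (P (b k)))) (nablaP (b l) (b i)))
        + 2 * R4 (b i) (P (b k)) (b l) (P (b j))))))))))))) = 0 := by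
      intro i j k l
      have h1 := LQ (b i) (P (b k)) (b l) (P (b j))
      have h2 := hL2 (b i) (P (b k)) (b l) (P (b j))
      linarith
    have h0 := (S4_congr hpt).trans (S4_zero (ginv := ginv))
    rw [S4_add, S4_add, S4_add, S4_add, S4_add, S4_add, S4_add, S4_add, S4_add,
      S4_add, S4_add, S4_add, S4_neg, S4_neg, S4_neg, S4_neg, S4_neg, S4_neg,
      S4_cmul] at h0
    have e1 : S4 ginv (fun i j k l => g (nabla2P (b i) (P (b k)) (b l)) (P (P (b j)))) = D3 := by
      rw [hD3def]
      calc S4 ginv (fun i j k l => g (nabla2P (b i) (P (b k)) (b l)) (P (P (b j))))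
          = S4 ginv (fun i j k l => g (nabla2P (b i) (P (b k)) (b l)) (b j)) :=
            S4_congr (fun i j k l => by rw [hP2])
        _ = S4 ginv (fun i j k l => g (nabla2P (b i) (P (b k)) (b j)) (b l)) :=
            S4_congr (fun i j k l => LDFsym (b i) (P (b k)) (b l) (b j))
    have e2 : S4 ginv (fun i j k l => g (nabla2P (b i) (b l) (P (b k))) (P (P (b j)))) = D2 := by
      rw [hD2def]
      calc S4 ginv (fun i j k l => g (nabla2P (b i) (b l) (P (b k))) (P (P (b j))))
          = S4 ginv (fun i j k l => g (nabla2P (b i) (b l) (P (b k))) (b j)) :=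
            S4_congr (fun i j k l => by rw [hP2])
        _ = S4 ginv (fun i j k l => g (nabla2P (b i) (b l) (b j)) (P (b k))) :=
            S4_congr (fun i j k l => LDFsym (b i) (b l) (P (b k)) (b j))
        _ = S4 ginv (fun i j k l => g (nabla2P (b i) (b k) (b j)) (P (b l))) :=
            S4_kl hginvsymm _
    have e3 : S4 ginv (fun i j k l => g (nabla2P (P (b k)) (b i) (b l)) (P (P (b j)))) = D7 := by
      rw [hD7def]
      calc S4 ginv (fun i j k l => g (nabla2P (P (b k)) (b i) (b l)) (P (P (b j))))
          = S4 ginv (fun i j k l => g (nabla2P (P (b k)) (b i) (b l)) (b j)) :=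
            S4_congr (fun i j k l => by rw [hP2])
        _ = S4 ginv (fun i j k l => g (nabla2P (P (b k)) (b i) (b j)) (b l)) :=
            S4_congr (fun i j k l => LDFsym (P (b k)) (b i) (b l) (b j))
        _ = S4 ginv (fun i j k l => g (nabla2P (P (b i)) (b k) (b l)) (b j)) :=
            S4_pair _
        _ = S4 ginv (fun i j k l => g (nabla2P (P (b i)) (b k) (b j)) (b l)) :=
            S4_congr (fun i j k l => LDFsym (P (b i)) (b k) (b l) (b j))
    have e4 : S4 ginv (fun i j k l => g (nabla2P (P (b k)) (b l) (b i)) (P (P (b j)))) = D6 := by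
      rw [hD6def]
      calc S4 ginv (fun i j k l => g (nabla2P (P (b k)) (b l) (b i)) (P (P (b j))))
          = S4 ginv (fun i j k l => g (nabla2P (P (b k)) (b l) (b i)) (b j)) :=
            S4_congr (fun i j k l => by rw [hP2])
        _ = S4 ginv (fun i j k l => g (nabla2P (P (b i)) (b j) (b k)) (b l)) :=
            S4_pair _
    have e5 : S4 ginv (fun i j k l => g (nablaP (P (b k)) (b l)) (nablaP (b i) (P (b j)))) = 0 :=
      S4_zero_of_kl _ (fun i j => hE (nablaP (b i) (P (b j))))
    have e6 : S4 ginv (fun i j k l => g (nablaP (b l) (P (b k))) (nablaP (b i) (P (b j)))) = 0 :=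
      S4_zero_of_kl _ (fun i j => hthPb (nablaP (b i) (P (b j))))
    have e7 : S4 ginv (fun i j k l => g (nablaP (b i) (b l)) (nablaP (P (b k)) (P (b j)))) = F4 := by
      rw [hF4def]
      exact S4_kl hginvsymm _
    have e8 : S4 ginv (fun i j k l => g (nablaP (b l) (b i)) (nablaP (P (b k)) (P (b j)))) = F2 := by
      rw [hF2def]
      calc S4 ginv (fun i j k l => g (nablaP (b l) (b i)) (nablaP (P (b k)) (P (b j))))
          = S4 ginv (fun i j k l => g (nablaP (b j) (b k)) (nablaP (P (b i)) (P (b l)))) :=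
            S4_pair _
        _ = S4 ginv (fun i j k l => g (nablaP (b i) (b k)) (nablaP (P (b j)) (P (b l)))) :=
            S4_ij hginvsymm _
    have e9 : S4 ginv (fun i j k l => g (nablaP (P (P (b j))) (P (b i))) (nablaP (P (b k)) (b l))) = 0 := by
      have h1 : S4 ginv (fun i j k l => g (nablaP (P (P (b j))) (P (b i))) (nablaP (P (b k)) (b l)))
          = S4 ginv (fun i j k l => g (nablaP (b j) (P (b i))) (nablaP (P (b k)) (b l))) :=
        S4_congr (fun i j k l => by rw [hP2])
      rw [h1]
      exact S4_zero_of_ij _ (fun k l => hthPb (nablaP (P (b k)) (b l)))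
    have e10 : S4 ginv (fun i j k l => g (nablaP (P (P (b j))) (P (b i))) (nablaP (b l) (P (b k)))) = 0 := by
      have h1 : S4 ginv (fun i j k l => g (nablaP (P (P (b j))) (P (b i))) (nablaP (b l) (P (b k))))
          = S4 ginv (fun i j k l => g (nablaP (b j) (P (b i))) (nablaP (b l) (P (b k)))) :=
        S4_congr (fun i j k l => by rw [hP2])
      rw [h1]
      exact S4_zero_of_ij _ (fun k l => hthPb (nablaP (b l) (P (b k))))
    have e11 : S4 ginv (fun i j k l => g (nablaP (P (P (b j))) (P (P (b k)))) (nablaP (b i) (b l))) = A := by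
      rw [hAdef]
      calc S4 ginv (fun i j k l => g (nablaP (P (P (b j))) (P (P (b k)))) (nablaP (b i) (b l)))
          = S4 ginv (fun i j k l => g (nablaP (b j) (b k)) (nablaP (b i) (b l))) :=
            S4_congr (fun i j k l => by rw [hP2, hP2])
        _ = S4 ginv (fun i j k l => g (nablaP (b i) (b k)) (nablaP (b j) (b l))) :=
            S4_ij hginvsymm _
    have e12 : S4 ginv (fun i j k l => g (nablaP (P (P (b j))) (P (P (b k)))) (nablaP (b l) (b i))) = F3 := by
      rw [hF3def]
      calc S4 ginv (fun i j k l => g (nablaP (P (P (b j))) (P (P (b k)))) (nablaP (b l) (b i)))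
          = S4 ginv (fun i j k l => g (nablaP (b j) (b k)) (nablaP (b l) (b i))) :=
            S4_congr (fun i j k l => by rw [hP2, hP2])
        _ = S4 ginv (fun i j k l => g (nablaP (b i) (b k)) (nablaP (b l) (b j))) :=
            S4_ij hginvsymm _
    have e13 : S4 ginv (fun i j k l => R4 (b i) (P (b k)) (b l) (P (b j))) = -R4v := by
      rw [hR4def]
      calc S4 ginv (fun i j k l => R4 (b i) (P (b k)) (b l) (P (b j)))
          = S4 ginv (fun i j k l => -(R4 (b i) (P (b k)) (P (b j)) (b l))) :=
            S4_congr (fun i j k l => hR2 (b i) (P (b k)) (b l) (P (b j)))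
        _ = - S4 ginv (fun i j k l => R4 (b i) (P (b k)) (P (b j)) (b l)) := S4_neg _
    rw [e1, e2, e3, e4, e5, e6, e7, e8, e9, e10, e11, e12, e13] at h0
    linarith
  -- ROW 12 : L-contraction at (P i, k, l, P j)
  have row12 : D7 + D7 - D3 - D1 - F4 - A - F2 - F3 - 2*R5v = 0 := by
    have hpt : ∀ i j k l : ι,
        g (nabla2P (P (b i)) (b k) (b l)) (P (P (b j)))
        + (g (nabla2P (P (b i)) (b l) (b k)) (P (P (b j)))
        + (-(g (nabla2P (b k) (P (b i)) (b l)) (P (P (b j))))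
        + (-(g (nabla2P (b k) (b l) (P (b i))) (P (P (b j))))
        + (g (nablaP (b k) (b l)) (nablaP (P (b i)) (P (b j)))
        + (g (nablaP (b l) (b k)) (nablaP (P (b i)) (P (b j)))
        + (-(g (nablaP (P (b i)) (b l)) (nablaP (b k) (P (b j))))
        + (-(g (nablaP (b l) (P (b i))) (nablaP (b k) (P (b j))))
        + (g (nablaP (P (P (b j))) (P (P (b i)))) (nablaP (b k) (b l))
        + (g (nablaP (P (P (b j))) (P (P (b i)))) (nablaP (b l) (b k))
        + (-(g (nablaP (P (P (b j))) (P (b k))) (nablaP (P (b i)) (b l)))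
        + (-(g (nablaP (P (P (b j))) (P (b k))) (nablaP (b l) (P (b i))))
        + 2 * R4 (P (b i)) (b k) (b l) (P (b j))))))))))))) = 0 := by
      intro i j k l
      have h1 := LQ (P (b i)) (b k) (b l) (P (b j))
      have h2 := hL2 (P (b i)) (b k) (b l) (P (b j))
      linarith
    have h0 := (S4_congr hpt).trans (S4_zero (ginv := ginv))
    rw [S4_add, S4_add, S4_add, S4_add, S4_add, S4_add, S4_add, S4_add, S4_add,
      S4_add, S4_add, S4_add, S4_neg, S4_neg, S4_neg, S4_neg, S4_neg, S4_neg,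
      S4_cmul] at h0
    have e1 : S4 ginv (fun i j k l => g (nabla2P (P (b i)) (b k) (b l)) (P (P (b j)))) = D7 := by
      rw [hD7def]
      calc S4 ginv (fun i j k l => g (nabla2P (P (b i)) (b k) (b l)) (P (P (b j))))
          = S4 ginv (fun i j k l => g (nabla2P (P (b i)) (b k) (b l)) (b j)) :=
            S4_congr (fun i j k l => by rw [hP2])
        _ = S4 ginv (fun i j k l => g (nabla2P (P (b i)) (b k) (b j)) (b l)) :=
            S4_congr (fun i j k l => LDFsym (P (b i)) (b k) (b l) (b j))
    have e2 : S4 ginv (fun i j k l => g (nabla2P (P (b i)) (b l) (b k)) (P (P (b j)))) = D7 := by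
      rw [hD7def]
      calc S4 ginv (fun i j k l => g (nabla2P (P (b i)) (b l) (b k)) (P (P (b j))))
          = S4 ginv (fun i j k l => g (nabla2P (P (b i)) (b l) (b k)) (b j)) :=
            S4_congr (fun i j k l => by rw [hP2])
        _ = S4 ginv (fun i j k l => g (nabla2P (P (b i)) (b l) (b j)) (b k)) :=
            S4_congr (fun i j k l => LDFsym (P (b i)) (b l) (b k) (b j))
        _ = S4 ginv (fun i j k l => g (nabla2P (P (b i)) (b k) (b j)) (b l)) :=
            S4_kl hginvsymm _
    have e3 : S4 ginv (fun i j k l => g (nabla2P (b k) (P (b i)) (b l)) (P (P (b j)))) = D3 := by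
      rw [hD3def]
      calc S4 ginv (fun i j k l => g (nabla2P (b k) (P (b i)) (b l)) (P (P (b j))))
          = S4 ginv (fun i j k l => g (nabla2P (b k) (P (b i)) (b l)) (b j)) :=
            S4_congr (fun i j k l => by rw [hP2])
        _ = S4 ginv (fun i j k l => g (nabla2P (b i) (P (b k)) (b j)) (b l)) :=
            S4_pair _
    have e4 : S4 ginv (fun i j k l => g (nabla2P (b k) (b l) (P (b i))) (P (P (b j)))) = D1 := by
      rw [hD1def]
      calc S4 ginv (fun i j k l => g (nabla2P (b k) (b l) (P (b i))) (P (P (b j))))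
          = S4 ginv (fun i j k l => g (nabla2P (b k) (b l) (P (b i))) (b j)) :=
            S4_congr (fun i j k l => by rw [hP2])
        _ = S4 ginv (fun i j k l => g (nabla2P (b i) (b j) (P (b k))) (b l)) :=
            S4_pair _
        _ = S4 ginv (fun i j k l => g (nabla2P (b i) (b j) (b l)) (P (b k))) :=
            S4_congr (fun i j k l => LDFsym (b i) (b j) (P (b k)) (b l))
        _ = S4 ginv (fun i j k l => g (nabla2P (b i) (b j) (b k)) (P (b l))) :=
            S4_kl hginvsymm _
    have e5 : S4 ginv (fun i j k l => g (nablaP (b k) (b l)) (nablaP (P (b i)) (P (b j)))) = 0 := by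
      have h1 : S4 ginv (fun i j k l => g (nablaP (b k) (b l)) (nablaP (P (b i)) (P (b j))))
          = S4 ginv (fun i j k l => g (nablaP (P (b i)) (P (b j))) (nablaP (b k) (b l))) :=
        S4_congr (fun i j k l => hgsymm _ _)
      rw [h1]
      exact S4_zero_of_ij _ (fun k l => hE2 (nablaP (b k) (b l)))
    have e6 : S4 ginv (fun i j k l => g (nablaP (b l) (b k)) (nablaP (P (b i)) (P (b j)))) = 0 := by
      have h1 : S4 ginv (fun i j k l => g (nablaP (b l) (b k)) (nablaP (P (b i)) (P (b j))))
          = S4 ginv (fun i j k l => g (nablaP (P (b i)) (P (b j))) (nablaP (b l) (b k))) :=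
        S4_congr (fun i j k l => hgsymm _ _)
      rw [h1]
      exact S4_zero_of_ij _ (fun k l => hE2 (nablaP (b l) (b k)))
    have e7 : S4 ginv (fun i j k l => g (nablaP (P (b i)) (b l)) (nablaP (b k) (P (b j)))) = F4 := by
      rw [hF4def]
      calc S4 ginv (fun i j k l => g (nablaP (P (b i)) (b l)) (nablaP (b k) (P (b j))))
          = S4 ginv (fun i j k l => g (nablaP (b k) (P (b j))) (nablaP (P (b i)) (b l))) :=
            S4_congr (fun i j k l => hgsymm _ _)
        _ = S4 ginv (fun i j k l => g (nablaP (b k) (b j)) (nablaP (P (b i)) (P (b l)))) :=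
            S4_congr (fun i j k l => htog (b k) (b j) (P (b i)) (b l))
        _ = S4 ginv (fun i j k l => g (nablaP (b i) (b l)) (nablaP (P (b k)) (P (b j)))) :=
            S4_pair _
        _ = S4 ginv (fun i j k l => g (nablaP (b i) (b k)) (nablaP (P (b l)) (P (b j)))) :=
            S4_kl hginvsymm _
    have e8 : S4 ginv (fun i j k l => g (nablaP (b l) (P (b i))) (nablaP (b k) (P (b j)))) = A := by
      rw [hAdef]
      calc S4 ginv (fun i j k l => g (nablaP (b l) (P (b i))) (nablaP (b k) (P (b j))))
          = S4 ginv (fun i j k l => g (nablaP (b k) (P (b j))) (nablaP (b l) (P (b i)))) :=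
            S4_congr (fun i j k l => hgsymm _ _)
        _ = S4 ginv (fun i j k l => g (nablaP (b k) (b j)) (nablaP (b l) (P (P (b i))))) :=
            S4_congr (fun i j k l => htog (b k) (b j) (b l) (P (b i)))
        _ = S4 ginv (fun i j k l => g (nablaP (b k) (b j)) (nablaP (b l) (b i))) :=
            S4_congr (fun i j k l => by rw [hP2])
        _ = S4 ginv (fun i j k l => g (nablaP (b i) (b l)) (nablaP (b j) (b k))) :=
            S4_pair _
        _ = S4 ginv (fun i j k l => g (nablaP (b i) (b k)) (nablaP (b j) (b l))) :=
            S4_kl hginvsymm _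
    have e9 : S4 ginv (fun i j k l => g (nablaP (P (P (b j))) (P (P (b i)))) (nablaP (b k) (b l))) = 0 := by
      have h1 : S4 ginv (fun i j k l => g (nablaP (P (P (b j))) (P (P (b i)))) (nablaP (b k) (b l)))
          = S4 ginv (fun i j k l => g (nablaP (b j) (b i)) (nablaP (b k) (b l))) :=
        S4_congr (fun i j k l => by rw [hP2, hP2])
      rw [h1]
      exact S4_zero_of_ij _ (fun k l => hth' (nablaP (b k) (b l)))
    have e10 : S4 ginv (fun i j k l => g (nablaP (P (P (b j))) (P (P (b i)))) (nablaP (b l) (b k))) = 0 := by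
      have h1 : S4 ginv (fun i j k l => g (nablaP (P (P (b j))) (P (P (b i)))) (nablaP (b l) (b k)))
          = S4 ginv (fun i j k l => g (nablaP (b j) (b i)) (nablaP (b l) (b k))) :=
        S4_congr (fun i j k l => by rw [hP2, hP2])
      rw [h1]
      exact S4_zero_of_ij _ (fun k l => hth' (nablaP (b l) (b k)))
    have e11 : S4 ginv (fun i j k l => g (nablaP (P (P (b j))) (P (b k))) (nablaP (P (b i)) (b l))) = F2 := by
      rw [hF2def]
      calc S4 ginv (fun i j k l => g (nablaP (P (P (b j))) (P (b k))) (nablaP (P (b i)) (b l)))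
          = S4 ginv (fun i j k l => g (nablaP (b j) (P (b k))) (nablaP (P (b i)) (b l))) :=
            S4_congr (fun i j k l => by rw [hP2])
        _ = S4 ginv (fun i j k l => g (nablaP (b j) (b k)) (nablaP (P (b i)) (P (b l)))) :=
            S4_congr (fun i j k l => htog (b j) (b k) (P (b i)) (b l))
        _ = S4 ginv (fun i j k l => g (nablaP (b i) (b k)) (nablaP (P (b j)) (P (b l)))) :=
            S4_ij hginvsymm _
    have e12 : S4 ginv (fun i j k l => g (nablaP (P (P (b j))) (P (b k))) (nablaP (b l) (P (b i)))) = F3 := by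
      rw [hF3def]
      calc S4 ginv (fun i j k l => g (nablaP (P (P (b j))) (P (b k))) (nablaP (b l) (P (b i))))
          = S4 ginv (fun i j k l => g (nablaP (b j) (P (b k))) (nablaP (b l) (P (b i)))) :=
            S4_congr (fun i j k l => by rw [hP2])
        _ = S4 ginv (fun i j k l => g (nablaP (b j) (b k)) (nablaP (b l) (P (P (b i))))) :=
            S4_congr (fun i j k l => htog (b j) (b k) (b l) (P (b i)))
        _ = S4 ginv (fun i j k l => g (nablaP (b j) (b k)) (nablaP (b l) (b i))) :=
            S4_congr (fun i j k l => by rw [hP2])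
        _ = S4 ginv (fun i j k l => g (nablaP (b i) (b k)) (nablaP (b l) (b j))) :=
            S4_ij hginvsymm _
    have e13 : S4 ginv (fun i j k l => R4 (P (b i)) (b k) (b l) (P (b j))) = -R5v := by
      rw [hR5def]
      calc S4 ginv (fun i j k l => R4 (P (b i)) (b k) (b l) (P (b j)))
          = S4 ginv (fun i j k l => -(R4 (b k) (P (b i)) (b l) (P (b j)))) :=
            S4_congr (fun i j k l => hR1 (P (b i)) (b k) (b l) (P (b j)))
        _ = - S4 ginv (fun i j k l => R4 (b k) (P (b i)) (b l) (P (b j))) := S4_neg _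
        _ = - S4 ginv (fun i j k l => R4 (b i) (P (b k)) (b j) (P (b l))) := by
            rw [S4_pair (fun i j k l => R4 (b i) (P (b k)) (b j) (P (b l)))]
    rw [e1, e2, e3, e4, e5, e6, e7, e8, e9, e10, e11, e12, e13] at h0
    linarith
  -- final assembly
  have hnorm' : A = 2 * (-R3v - -R2v) := by
    rw [← htauR, ← htssR, ← hnPA]
    exact hnorm
  constructor
  · rw [hnPA, htauR]
    linarith
  · rw [htssR, htauR]
    linarith
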